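/- Let σ be an n-simplex in ℝ^N and let z ∈ Int σ. For y ∈ σ, define b(y) ∈ [0,1] by the relation y = b(y)·h̄(y) + (1−b(y))·z where h̄(y) ∈ Bd σ (with b(z) = 0). Then the function b : σ → [0,1] is Lipschitz. -/

import Mathlib

/-- The simplicial interior of the simplex spanned by `v 0, …, v n`. -/
def simplexInterior {E : Type*} [AddCommGroup E] [Module ℝ E] {n : ℕ}
    (v : Fin (n + 1) → E) : Set E :=
  {y | ∃ β : Fin (n + 1) → ℝ, (∀ i, 0 < β i) ∧ (∑ i, β i) = 1 ∧ y = ∑ i, β i • v i}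

open Finset

/-- Barycentric coordinates w.r.t. an affinely independent family are Lipschitz. -/
lemma coord_lipschitz {N n : ℕ} (v : Fin (n + 1) → EuclideanSpace ℝ (Fin N))
    (hv : AffineIndependent ℝ v) :
    ∃ K : ℝ, 0 ≤ K ∧ ∀ α α' : Fin (n+1) → ℝ, (∑ i, α i) = 1 → (∑ i, α' i) = 1 →
      ∀ j, |α' j - α j| ≤ K * ‖(∑ i, α' i • v i) - ∑ i, α i • v i‖ := by
  set T : (Fin (n+1) → ℝ) →ₗ[ℝ] (EuclideanSpace ℝ (Fin N)) × ℝ :=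
    LinearMap.prod (Fintype.linearCombination ℝ v)
      ((Fintype.linearCombination ℝ (fun _ : Fin (n+1) => (1:ℝ)))) with hT
  have hker : LinearMap.ker T = ⊥ := by
    rw [LinearMap.ker_eq_bot']
    intro c hc
    have h1 : ∑ i, c i • v i = 0 := by
      simpa [hT, Fintype.linearCombination_apply] using congrArg Prod.fst hc
    have h2 : ∑ i, c i = 0 := by
      simpa [hT, Fintype.linearCombination_apply] using congrArg Prod.snd hc
    funext j
    exact affineIndependent_iff.1 hv univ c (by simpa using h2) h1 j (mem_univ j)
  obtain ⟨K, hK0, hK⟩ := T.exists_antilipschitzWith hker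
  refine ⟨K, K.coe_nonneg, fun α α' h1 h1' j => ?_⟩
  have hd : dist (α' j) (α j) ≤ dist α' α := dist_le_pi_dist α' α j
  have hK' : dist α' α ≤ K * dist (T α') (T α) := hK.le_mul_dist α' α
  have hTd : dist (T α') (T α) = ‖(∑ i, α' i • v i) - ∑ i, α i • v i‖ := by
    rw [Prod.dist_eq]
    simp [hT, Fintype.linearCombination_apply, h1, h1', dist_eq_norm]
  rw [Real.dist_eq] at hd
  calc |α' j - α j| ≤ dist α' α := hd
    _ ≤ K * dist (T α') (T α) := hK'
    _ = K * ‖(∑ i, α' i • v i) - ∑ i, α i • v i‖ := by rw [hTd]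

/-- Membership in the hull gives full barycentric weights. -/
lemma mem_hull_coords {N n : ℕ} (v : Fin (n + 1) → EuclideanSpace ℝ (Fin N))
    {y : EuclideanSpace ℝ (Fin N)} (hy : y ∈ convexHull ℝ (Set.range v)) :
    ∃ w : Fin (n+1) → ℝ, (∀ i, 0 ≤ w i) ∧ (∑ i, w i) = 1 ∧ y = ∑ i, w i • v i := by
  rw [convexHull_range_eq_exists_affineCombination] at hy
  obtain ⟨s, w, h0, h1, h2⟩ := hy
  refine ⟨fun i => if i ∈ s then w i else 0, fun i => by by_cases h : i ∈ s <;> simp [h, h0 i], ?_, ?_⟩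
  · rw [Finset.sum_ite_mem, univ_inter, h1]
  · rw [← h2, affineCombination_eq_linear_combination s v w h1]
    rw [show (∑ i : Fin (n+1), (fun i => if i ∈ s then w i else 0) i • v i)
        = ∑ i : Fin (n+1), (if i ∈ s then w i • v i else 0) from
      Finset.sum_congr rfl fun i _ => by dsimp only; split <;> simp]
    rw [Finset.sum_ite_mem, univ_inter]

theorem stmt_8' {N n : ℕ} (v : Fin (n + 1) → EuclideanSpace ℝ (Fin N))
    (hv : AffineIndependent ℝ v)
    (z : EuclideanSpace ℝ (Fin N))
    (hz : z ∈ {y | ∃ β : Fin (n + 1) → ℝ, (∀ i, 0 < β i) ∧ (∑ i, β i) = 1 ∧ y = ∑ i, β i • v i}) :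
    ∃ K : ℝ, ∀ y₁ ∈ convexHull ℝ (Set.range v), ∀ y₂ ∈ convexHull ℝ (Set.range v),
      ∀ b₁ ∈ Set.Icc (0 : ℝ) 1, ∀ b₂ ∈ Set.Icc (0 : ℝ) 1,
      (∃ h₁ ∈ convexHull ℝ (Set.range v) \
          {y | ∃ β : Fin (n + 1) → ℝ, (∀ i, 0 < β i) ∧ (∑ i, β i) = 1 ∧ y = ∑ i, β i • v i},
          y₁ = b₁ • h₁ + (1 - b₁) • z) →
      (∃ h₂ ∈ convexHull ℝ (Set.range v) \
          {y | ∃ β : Fin (n + 1) → ℝ, (∀ i, 0 < β i) ∧ (∑ i, β i) = 1 ∧ y = ∑ i, β i • v i},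
          y₂ = b₂ • h₂ + (1 - b₂) • z) →
      |b₂ - b₁| ≤ K * ‖y₂ - y₁‖ := by
  obtain ⟨β, hβpos, hβsum, hβz⟩ := hz
  obtain ⟨K, hK0, hK⟩ := coord_lipschitz v hv
  set S : ℝ := ∑ i, (β i)⁻¹ with hS
  refine ⟨K * S, ?_⟩
  -- the one-sided key estimate
  have key : ∀ y₁ ∈ convexHull ℝ (Set.range v), ∀ y₂ ∈ convexHull ℝ (Set.range v),
      ∀ b₁ ∈ Set.Icc (0 : ℝ) 1, ∀ b₂ ∈ Set.Icc (0 : ℝ) 1,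
      (∃ h₁ ∈ convexHull ℝ (Set.range v) \
          {y | ∃ β : Fin (n + 1) → ℝ, (∀ i, 0 < β i) ∧ (∑ i, β i) = 1 ∧ y = ∑ i, β i • v i},
          y₁ = b₁ • h₁ + (1 - b₁) • z) →
      (∃ h₂ ∈ convexHull ℝ (Set.range v) \
          {y | ∃ β : Fin (n + 1) → ℝ, (∀ i, 0 < β i) ∧ (∑ i, β i) = 1 ∧ y = ∑ i, β i • v i},
          y₂ = b₂ • h₂ + (1 - b₂) • z) →
      b₂ - b₁ ≤ (K * S) * ‖y₂ - y₁‖ := by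
    rintro y₁ hy₁ y₂ hy₂ b₁ ⟨hb₁0, hb₁1⟩ b₂ ⟨hb₂0, hb₂1⟩ ⟨h₁, ⟨hh₁c, _⟩, hy₁e⟩
      ⟨h₂, ⟨hh₂c, hh₂i⟩, hy₂e⟩
    obtain ⟨γ₁, hγ₁0, hγ₁s, hγ₁e⟩ := mem_hull_coords v hh₁c
    obtain ⟨γ₂, hγ₂0, hγ₂s, hγ₂e⟩ := mem_hull_coords v hh₂c
    -- h₂ has a vanishing barycentric coordinate
    obtain ⟨j, hj⟩ : ∃ j, γ₂ j = 0 := by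
      by_contra hcon
      push_neg at hcon
      exact hh₂i ⟨γ₂, fun i => lt_of_le_of_ne (hγ₂0 i) (Ne.symm (hcon i)), hγ₂s, hγ₂e⟩
    set α₁ : Fin (n+1) → ℝ := fun i => b₁ * γ₁ i + (1 - b₁) * β i with hα₁
    set α₂ : Fin (n+1) → ℝ := fun i => b₂ * γ₂ i + (1 - b₂) * β i with hα₂
    have hs₁ : (∑ i, α₁ i) = 1 := by
      simp only [hα₁, Finset.sum_add_distrib, ← Finset.mul_sum, hγ₁s, hβsum]; ring
    have hs₂ : (∑ i, α₂ i) = 1 := by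
      simp only [hα₂, Finset.sum_add_distrib, ← Finset.mul_sum, hγ₂s, hβsum]; ring
    have he₁ : y₁ = ∑ i, α₁ i • v i := by
      rw [hy₁e, hγ₁e, hβz, Finset.smul_sum, Finset.smul_sum, ← Finset.sum_add_distrib]
      exact Finset.sum_congr rfl fun i _ => by simp [hα₁, add_smul, smul_smul]
    have he₂ : y₂ = ∑ i, α₂ i • v i := by
      rw [hy₂e, hγ₂e, hβz, Finset.smul_sum, Finset.smul_sum, ← Finset.sum_add_distrib]
      exact Finset.sum_congr rfl fun i _ => by simp [hα₂, add_smul, smul_smul]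
    have hbound := hK α₁ α₂ hs₁ hs₂ j
    rw [← he₁, ← he₂] at hbound
    have hdiff : (b₂ - b₁) * β j ≤ α₁ j - α₂ j := by
      have : α₂ j = (1 - b₂) * β j := by simp [hα₂, hj]
      have h1 : (1 - b₁) * β j ≤ α₁ j := by
        have := mul_nonneg hb₁0 (hγ₁0 j)
        simp only [hα₁]; linarith
      nlinarith [hβpos j]
    have habs : α₁ j - α₂ j ≤ K * ‖y₂ - y₁‖ := le_trans (le_abs_self _) (by rwa [abs_sub_comm])
    have hβinv : (β j)⁻¹ ≤ S := by
      rw [hS]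
      exact Finset.single_le_sum (f := fun i => (β i)⁻¹)
        (fun i _ => le_of_lt (inv_pos.2 (hβpos i))) (Finset.mem_univ j)
    have hβj := hβpos j
    have hKn : 0 ≤ K * ‖y₂ - y₁‖ := mul_nonneg hK0 (norm_nonneg _)
    calc b₂ - b₁ ≤ (K * ‖y₂ - y₁‖) * (β j)⁻¹ := by
          rw [← div_eq_mul_inv, le_div_iff₀ hβj]; linarith
      _ ≤ (K * ‖y₂ - y₁‖) * S := by nlinarith
      _ = (K * S) * ‖y₂ - y₁‖ := by ring
  rintro y₁ hy₁ y₂ hy₂ b₁ hb₁ b₂ hb₂ hd₁ hd₂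
  rcases le_total b₁ b₂ with h | h
  · rw [abs_of_nonneg (by linarith)]
    exact key y₁ hy₁ y₂ hy₂ b₁ hb₁ b₂ hb₂ hd₁ hd₂
  · rw [abs_of_nonpos (by linarith), neg_sub]
    calc b₁ - b₂ ≤ (K * S) * ‖y₁ - y₂‖ := key y₂ hy₂ y₁ hy₁ b₂ hb₂ b₁ hb₁ hd₂ hd₁
      _ = (K * S) * ‖y₂ - y₁‖ := by rw [norm_sub_rev]

/-- for an `n`-simplex `σ ⊂ ℝ^N` and `z ∈ Int σ`, the function
`b : σ → [0,1]` determined by `y = b(y)·h̄(y) + (1−b(y))·z` with `h̄(y) ∈ Bd σ`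
(and `b(z) = 0`) is Lipschitz.  We express this via the defining relation:
any values `b₁, b₂ ∈ [0,1]` satisfying the relation at points `y₁, y₂ ∈ σ`
differ by at most `K·‖y₂ − y₁‖`. -/
theorem stmt_8 {N n : ℕ} (v : Fin (n + 1) → EuclideanSpace ℝ (Fin N))
    (hv : AffineIndependent ℝ v)
    (z : EuclideanSpace ℝ (Fin N)) (hz : z ∈ simplexInterior v) :
    ∃ K : ℝ, ∀ y₁ ∈ convexHull ℝ (Set.range v), ∀ y₂ ∈ convexHull ℝ (Set.range v),
      ∀ b₁ ∈ Set.Icc (0 : ℝ) 1, ∀ b₂ ∈ Set.Icc (0 : ℝ) 1,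
      (∃ h₁ ∈ convexHull ℝ (Set.range v) \ simplexInterior v,
          y₁ = b₁ • h₁ + (1 - b₁) • z) →
      (∃ h₂ ∈ convexHull ℝ (Set.range v) \ simplexInterior v,
          y₂ = b₂ • h₂ + (1 - b₂) • z) →
      |b₂ - b₁| ≤ K * ‖y₂ - y₁‖ := by
  exact stmt_8' v hv z hz
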